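/- For s > 0, k ≥ 0, and 0 < |α| < 1 with k+2−s ≠ 0, the Laplace coefficients satisfy the three-term recurrence b_{s,k+2}(α) = ((k+1)/(k+2−s)) (α + 1/α) b_{s,k+1}(α) − ((k+s)/(k+2−s)) b_{s,k}(α). -/

import Mathlib

open Real intervalIntegral MeasureTheory

noncomputable def laplaceCoeff (s : ℝ) (k : ℤ) (α : ℝ) : ℝ :=
  (1 / (2 * Real.pi)) * ∫ t in (0:ℝ)..(2 * Real.pi),
    Real.cos (k * t) / (1 + α ^ 2 - 2 * α * Real.cos t) ^ s

theorem stmt_5 (s : ℝ) (hs : 0 < s) (k : ℕ) (α : ℝ) (h0 : 0 < |α|) (h1 : |α| < 1)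
    (hk : (k : ℝ) + 2 - s ≠ 0) :
    laplaceCoeff s ((k : ℤ) + 2) α
      = (((k : ℝ) + 1) / ((k : ℝ) + 2 - s)) * (α + 1 / α) * laplaceCoeff s ((k : ℤ) + 1) α
        - (((k : ℝ) + s) / ((k : ℝ) + 2 - s)) * laplaceCoeff s (k : ℤ) α := by
  have hα : α ≠ 0 := abs_pos.mp h0
  set D : ℝ → ℝ := fun t => 1 + α ^ 2 - 2 * α * Real.cos t with hDdef
  have hD : ∀ t, 0 < D t := by
    intro t
    have h2 : 2 * α * Real.cos t ≤ 2 * |α| := by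
      calc 2 * α * Real.cos t ≤ |2 * α * Real.cos t| := le_abs_self _
        _ = 2 * |α| * |Real.cos t| := by
            rw [abs_mul, abs_mul]; norm_num
        _ ≤ 2 * |α| * 1 := by
            have := Real.abs_cos_le_one t
            nlinarith [abs_nonneg α]
        _ = 2 * |α| := by ring
    have hsq : α ^ 2 = |α| ^ 2 := (sq_abs α).symm
    have hpos : (0:ℝ) < (1 - |α|) * (1 - |α|) :=
      mul_pos (by linarith) (by linarith)
    simp only [hDdef]
    nlinarith
  have hDne : ∀ t, D t ≠ 0 := fun t => (hD t).ne'
  have hDcont : Continuous D := by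
    simp only [hDdef]; fun_prop
  have hpcont : ∀ p : ℝ, Continuous fun t => D t ^ p := fun p =>
    hDcont.rpow_const fun t => Or.inl (hDne t)
  have hmcont : ∀ m p : ℝ, Continuous fun t => Real.cos (m * t) * D t ^ p := fun m p =>
    (Real.continuous_cos.comp (continuous_const.mul continuous_id)).mul (hpcont p)
  set c : ℝ := (k : ℝ) + 1 with hcdef
  have hc : (0:ℝ) < c := by positivity
  set J : ℝ → ℝ := fun m => ∫ t in (0:ℝ)..(2 * Real.pi), Real.cos (m * t) * D t ^ (-s)
    with hJdef
  set C : ℝ := ∫ t in (0:ℝ)..(2 * Real.pi), Real.cos (c * t) * D t ^ (1 - s) with hCdef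
  -- integration by parts
  have hDder : ∀ x, HasDerivAt D (2 * α * Real.sin x) x := by
    intro x
    have h := ((Real.hasDerivAt_cos x).const_mul (2 * α)).const_sub (1 + α ^ 2)
    exact h.congr_deriv (by ring)
  have hu : ∀ x, HasDerivAt (fun t => D t ^ (1 - s))
      (2 * α * Real.sin x * (1 - s) * D x ^ (-s)) x := by
    intro x
    have h := (hDder x).rpow_const (p := 1 - s) (Or.inl (hDne x))
    convert h using 2; ring
  have hv : ∀ x, HasDerivAt (fun t => Real.sin (c * t) / c) (Real.cos (c * x)) x := by
    intro x
    have h1 : HasDerivAt (fun t : ℝ => c * t) c x := by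
      simpa using (hasDerivAt_id x).const_mul c
    have h := ((Real.hasDerivAt_sin (c * x)).comp x h1).div_const c
    exact h.congr_deriv (by field_simp)
  have hsin2pi : Real.sin (c * (2 * Real.pi)) = 0 := by
    have he : c * (2 * Real.pi) = ((2 * (k + 1) : ℤ) : ℝ) * Real.pi := by
      push_cast [hcdef]; ring
    rw [he, Real.sin_int_mul_pi]
  have hIBP : C = ∫ t in (0:ℝ)..(2 * Real.pi),
      ((s - 1) * α / c) * ((Real.cos ((k:ℝ) * t) - Real.cos (((k:ℝ) + 2) * t)) * D t ^ (-s)) := by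
    have hcontu' : Continuous fun x => 2 * α * Real.sin x * (1 - s) * D x ^ (-s) := by
      have h1 : Continuous fun x => 2 * α * Real.sin x * (1 - s) := by fun_prop
      exact h1.mul (hpcont (-s))
    have h := intervalIntegral.integral_mul_deriv_eq_deriv_mul
      (u := fun t => D t ^ (1 - s)) (v := fun t => Real.sin (c * t) / c)
      (u' := fun x => 2 * α * Real.sin x * (1 - s) * D x ^ (-s))
      (v' := fun x => Real.cos (c * x))
      (a := 0) (b := 2 * Real.pi)
      (fun x _ => hu x) (fun x _ => hv x)
      (hcontu'.intervalIntegrable _ _)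
      (by apply Continuous.intervalIntegrable; fun_prop)
    rw [hCdef]
    calc (∫ t in (0:ℝ)..(2 * Real.pi), Real.cos (c * t) * D t ^ (1 - s))
        = ∫ t in (0:ℝ)..(2 * Real.pi), D t ^ (1 - s) * Real.cos (c * t) := by
          apply intervalIntegral.integral_congr; intro t _; ring
      _ = - ∫ x in (0:ℝ)..(2 * Real.pi),
            (2 * α * Real.sin x * (1 - s) * D x ^ (-s)) * (Real.sin (c * x) / c) := by
          rw [h]
          simp [hsin2pi]
      _ = ∫ x in (0:ℝ)..(2 * Real.pi),
            ((s - 1) * α / c) * ((Real.cos ((k:ℝ) * x) - Real.cos (((k:ℝ) + 2) * x)) * D x ^ (-s)) := by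
          rw [← intervalIntegral.integral_neg]
          apply intervalIntegral.integral_congr
          intro x _
          have htrig : Real.sin (c * x) * Real.sin x
              = (Real.cos ((k:ℝ) * x) - Real.cos (((k:ℝ) + 2) * x)) / 2 := by
            have e1 : (k:ℝ) * x = c * x - x := by rw [hcdef]; ring
            have e2 : ((k:ℝ) + 2) * x = c * x + x := by rw [hcdef]; ring
            rw [e1, e2, Real.cos_sub, Real.cos_add]
            ring
          linear_combination (2 * (s - 1) * α / c * D x ^ (-s)) * htrig
  have hCval : C = ((s - 1) * α / c) * (J (k:ℝ) - J ((k:ℝ) + 2)) := by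
    rw [hIBP, intervalIntegral.integral_const_mul, hJdef]
    congr 1
    rw [← intervalIntegral.integral_sub
      ((hmcont (k:ℝ) (-s)).intervalIntegrable _ _)
      ((hmcont ((k:ℝ)+2) (-s)).intervalIntegrable _ _)]
    apply intervalIntegral.integral_congr
    intro t _; ring
  -- main pointwise identity integrated
  have hmain : J ((k:ℝ) + 2) + J (k:ℝ) = (α + 1 / α) * J ((k:ℝ) + 1) - (1 / α) * C := by
    have hpoint : ∀ t, Real.cos (((k:ℝ) + 2) * t) * D t ^ (-s) + Real.cos ((k:ℝ) * t) * D t ^ (-s)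
        = (α + 1 / α) * (Real.cos (((k:ℝ) + 1) * t) * D t ^ (-s))
          - (1 / α) * (Real.cos (((k:ℝ) + 1) * t) * D t ^ (1 - s)) := by
      intro t
      have e1 : (k:ℝ) * t = ((k:ℝ) + 1) * t - t := by ring
      have e2 : ((k:ℝ) + 2) * t = ((k:ℝ) + 1) * t + t := by ring
      have hsplit : D t ^ (1 - s) = D t * D t ^ (-s) := by
        rw [show (1:ℝ) - s = 1 + (-s) by ring, Real.rpow_add (hD t), Real.rpow_one]
      have hDt : D t = 1 + α ^ 2 - 2 * α * Real.cos t := rfl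
      rw [e1, e2, Real.cos_sub, Real.cos_add, hsplit, hDt]
      field_simp
      ring
    calc J ((k:ℝ) + 2) + J (k:ℝ)
        = ∫ t in (0:ℝ)..(2 * Real.pi),
            (Real.cos (((k:ℝ) + 2) * t) * D t ^ (-s) + Real.cos ((k:ℝ) * t) * D t ^ (-s)) := by
          rw [hJdef]
          rw [← intervalIntegral.integral_add
            ((hmcont ((k:ℝ)+2) (-s)).intervalIntegrable _ _)
            ((hmcont (k:ℝ) (-s)).intervalIntegrable _ _)]
      _ = ∫ t in (0:ℝ)..(2 * Real.pi),
            ((α + 1 / α) * (Real.cos (((k:ℝ) + 1) * t) * D t ^ (-s))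
              - (1 / α) * (Real.cos (((k:ℝ) + 1) * t) * D t ^ (1 - s))) := by
          apply intervalIntegral.integral_congr
          intro t _; exact hpoint t
      _ = (α + 1 / α) * J ((k:ℝ) + 1) - (1 / α) * C := by
          rw [intervalIntegral.integral_sub
            (f := fun t => (α + 1 / α) * (Real.cos (((k:ℝ) + 1) * t) * D t ^ (-s)))
            (g := fun t => (1 / α) * (Real.cos (((k:ℝ) + 1) * t) * D t ^ (1 - s)))
            (by apply Continuous.intervalIntegrable; exact continuous_const.mul (hmcont _ _))
            (by apply Continuous.intervalIntegrable; exact continuous_const.mul (hmcont _ _)),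
            intervalIntegral.integral_const_mul, intervalIntegral.integral_const_mul]
  have hC2 : c * ((1 / α) * C) = (s - 1) * (J (k:ℝ) - J ((k:ℝ) + 2)) := by
    rw [hCval]
    field_simp
  have hrec : ((k:ℝ) + 2 - s) * J ((k:ℝ) + 2)
      = ((k:ℝ) + 1) * (α + 1 / α) * J ((k:ℝ) + 1) - ((k:ℝ) + s) * J (k:ℝ) := by
    rw [hcdef] at hC2
    linear_combination ((k:ℝ) + 1) * hmain - hC2
  have hJeq : ∀ m : ℤ, laplaceCoeff s m α = (1 / (2 * Real.pi)) * J (m:ℝ) := by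
    intro m
    rw [laplaceCoeff]
    congr 1
    rw [show J (m:ℝ) = ∫ t in (0:ℝ)..(2 * Real.pi), Real.cos ((m:ℝ) * t) * D t ^ (-s) from rfl]
    apply intervalIntegral.integral_congr
    intro t _
    show Real.cos ((m:ℝ) * t) / D t ^ s = Real.cos ((m:ℝ) * t) * D t ^ (-s)
    rw [Real.rpow_neg (hD t).le, div_eq_mul_inv]
  have h2 : laplaceCoeff s ((k:ℤ) + 2) α = (1 / (2 * Real.pi)) * J ((k:ℝ) + 2) := by
    rw [hJeq]; push_cast; ring_nf
  have h1' : laplaceCoeff s ((k:ℤ) + 1) α = (1 / (2 * Real.pi)) * J ((k:ℝ) + 1) := by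
    rw [hJeq]; push_cast; ring_nf
  have h0' : laplaceCoeff s (k:ℤ) α = (1 / (2 * Real.pi)) * J (k:ℝ) := by
    rw [hJeq]; push_cast; ring_nf
  have e : J ((k:ℝ) + 2)
      = (((k:ℝ) + 1) * (α + 1 / α) * J ((k:ℝ) + 1) - ((k:ℝ) + s) * J (k:ℝ))
        / ((k:ℝ) + 2 - s) := by
    rw [eq_div_iff hk]
    linear_combination hrec
  rw [h2, h1', h0', e]
  ring
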